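/- Fix L ∈ ℕ₀, a commutative ring R with unit, a tuple m = (m_0,…,m_L) ∈ R^{L+1}, a topological space X, and a family of homeomorphisms Θ_{L,n,i} : Δ_n → Δ_n (n ∈ ℕ₀, i ∈ {0,…,L}). Assume that for every n ≥ 1, all i,k ∈ {0,…,L}, and all j,p ∈ {0,…,n} with j ≤ p, the equality EQUATION_{n,j≤p,i,k} holds. Then for every n ∈ ℕ₀ and every continuous map T : Δ_{n+1} → X one has ∂_n(∂_{n+1}(T)) = 0 in F(R)_n(X). -/

import Mathlib

open scoped BigOperators

noncomputable section

/-- `Spx k` is the standard simplex on `k` coordinates, i.e. the standard simplex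
`Δ_{k-1}` of the paper, as a subspace of `ℝ^k`. -/
abbrev Spx (k : ℕ) : Type := {x : Fin k → ℝ // x ∈ stdSimplex ℝ (Fin k)}

/-- the value `v = i/((L+1)(n+1))` inserted by the face map `⟨·⟩_{L,n,i,j}`. -/
def vval (L n : ℕ) (i : Fin (L+1)) : ℝ := (i : ℝ) / (((L:ℝ)+1) * ((n:ℝ)+1))

lemma vval_nonneg (L n : ℕ) (i : Fin (L+1)) : 0 ≤ vval L n i := by
  unfold vval; positivity

lemma vval_lt_one (L n : ℕ) (i : Fin (L+1)) : vval L n i < 1 := by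
  unfold vval
  rw [div_lt_one (by positivity)]
  have h1 : (i : ℝ) < (L:ℝ)+1 := by exact_mod_cast i.isLt
  have h2 : ((L:ℝ)+1) ≤ ((L:ℝ)+1) * ((n:ℝ)+1) := by
    nlinarith [Nat.cast_nonneg (α := ℝ) L, Nat.cast_nonneg (α := ℝ) n]
  linarith

/-- the underlying function of the face map `⟨id⟩_{L,n,i,j} : Δ_{n-1} → Δ_n`:
insert the value `v` at position `j` and rescale the remaining coordinates by `1 - v`. -/
def faceFun (L n : ℕ) (i : Fin (L+1)) (j : Fin (n+1)) (x : Fin n → ℝ) : Fin (n+1) → ℝ :=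
  j.insertNth (vval L n i) (fun k => (1 - vval L n i) * x k)

lemma faceFun_mem (L n : ℕ) (i : Fin (L+1)) (j : Fin (n+1)) {x : Fin n → ℝ}
    (hx : x ∈ stdSimplex ℝ (Fin n)) :
    faceFun L n i j x ∈ stdSimplex ℝ (Fin (n+1)) := by
  constructor
  · intro m
    rcases eq_or_ne m j with rfl | h
    · simpa [faceFun] using vval_nonneg L n i
    · obtain ⟨k, rfl⟩ := Fin.exists_succAbove_eq h
      simp only [faceFun, Fin.insertNth_apply_succAbove]
      exact mul_nonneg (by linarith [vval_lt_one L n i]) (hx.1 k)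
  · rw [Fin.sum_univ_succAbove _ j]
    simp only [faceFun, Fin.insertNth_apply_same, Fin.insertNth_apply_succAbove]
    rw [← Finset.mul_sum, hx.2]
    ring

/-- the face map `⟨id⟩_{L,n,i,j} : Δ_{n-1} → Δ_n` as a continuous map. -/
def faceCM (L n : ℕ) (i : Fin (L+1)) (j : Fin (n+1)) : C(Spx n, Spx (n+1)) where
  toFun x := ⟨faceFun L n i j x.1, faceFun_mem L n i j x.2⟩
  continuous_toFun := by
    refine Continuous.subtype_mk ?_ _
    refine continuous_pi fun m => ?_
    rcases eq_or_ne m j with rfl | h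
    · simpa [faceFun] using (continuous_const : Continuous fun _ : Spx n => vval L n i)
    · obtain ⟨k, rfl⟩ := Fin.exists_succAbove_eq h
      simp only [faceFun, Fin.insertNth_apply_succAbove]
      exact continuous_const.mul ((continuous_apply k).comp continuous_subtype_val)

open Fin.NatCast in
/-- `EQUATION_{n,j≤p,i,k}` of the paper, where `n = n'+1 ≥ 1`: the equality of the
two composite maps `Δ_{n-1} → Δ_{n+1}`, namely
`⟨id⟩_{L,n+1,i,j} ∘ Θ_{L,n,i} ∘ ⟨id⟩_{L,n,k,p} ∘ Θ_{L,n-1,k}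
  = ⟨id⟩_{L,n+1,k,p+1} ∘ Θ_{L,n,k} ∘ ⟨id⟩_{L,n,i,j} ∘ Θ_{L,n-1,i}`. -/
def EquationHolds (L : ℕ)
    (Θ : ∀ n : ℕ, Fin (L+1) → (Spx (n+1) ≃ₜ Spx (n+1)))
    (n' : ℕ) (i k : Fin (L+1)) (j p : Fin (n'+2)) : Prop :=
  ∀ x : Spx (n'+1),
    faceCM L (n'+2) i j.castSucc ((Θ (n'+1) i) (faceCM L (n'+1) k p ((Θ n' k) x))) =
    faceCM L (n'+2) k p.succ ((Θ (n'+1) k) (faceCM L (n'+1) i ((j.castSucc : ℕ) : Fin (n'+1+1)) ((Θ n' i) x)))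

variable (R : Type) [CommRing R] (X : Type) [TopologicalSpace X]

/-- `Chains R X k` is the module `F(R)_{k-1}(X)` of the paper; in particular
`Chains R X 0 = F(R)_{-1}(X)` is the zero module, and `Chains R X (n+1) = F(R)_n(X)`
is the free `R`-module on the set of continuous maps `Δ_n → X`. -/
def Chains : ℕ → Type
  | 0 => PUnit
  | (n+1) => C(Spx (n+1), X) →₀ R

instance : ∀ k, AddCommGroup (Chains R X k)
  | 0 => inferInstanceAs (AddCommGroup PUnit)
  | (n+1) => inferInstanceAs (AddCommGroup (C(Spx (n+1), X) →₀ R))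

instance (priority := 10000) : ∀ k, Module R (Chains R X k)
  | 0 => inferInstanceAs (Module R PUnit)
  | (n+1) => inferInstanceAs (Module R (C(Spx (n+1), X) →₀ R))

variable {X}

/-- the continuous map `⟨T⟩_{L,n+1,i,j} ∘ Θ_{L,n,i} : Δ_n → X`, for `T : Δ_{n+1} → X`. -/
def chainFace (L : ℕ) (Θ : ∀ n : ℕ, Fin (L+1) → (Spx (n+1) ≃ₜ Spx (n+1))) (n : ℕ)
    (T : C(Spx (n+2), X)) (i : Fin (L+1)) (j : Fin (n+2)) : C(Spx (n+1), X) :=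
  (T.comp (faceCM L (n+1) i j)).comp (Θ n i : C(Spx (n+1), Spx (n+1)))

variable (X)

/-- the boundary operator `∂_{n+1} : F(R)_{n+1}(X) → F(R)_n(X)` of the paper:
`∂(T) = Σ_j (-1)^j Σ_i m_i • [⟨T⟩_{L,n+1,i,j} ∘ Θ_{L,n,i}]` on basis elements. -/
def bddry (L : ℕ) (m : Fin (L+1) → R)
    (Θ : ∀ n : ℕ, Fin (L+1) → (Spx (n+1) ≃ₜ Spx (n+1))) (n : ℕ) :
    (C(Spx (n+2), X) →₀ R) →ₗ[R] (C(Spx (n+1), X) →₀ R) :=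
  Finsupp.lift _ R _ (fun T => ∑ j : Fin (n+2), ∑ i : Fin (L+1),
    ((-1 : R)^(j : ℕ) * m i) • Finsupp.single (chainFace L Θ n T i j) (1 : R))

/-- the full family of boundary operators `∂_k : F(R)_k(X) → F(R)_{k-1}(X)`
of the paper, with `∂_0 = 0`. -/
def paperBoundary (L : ℕ) (m : Fin (L+1) → R)
    (Θ : ∀ n : ℕ, Fin (L+1) → (Spx (n+1) ≃ₜ Spx (n+1))) :
    ∀ k, Chains R X (k+1) →ₗ[R] Chains R X k
  | 0 => 0
  | (n+1) => bddry R X L m Θ n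


section Aux

variable {L : ℕ} (Θ : ∀ n : ℕ, Fin (L+1) → (Spx (n+1) ≃ₜ Spx (n+1)))
variable {X : Type} [TopologicalSpace X]

lemma key_comm (n' : ℕ) (i k : Fin (L+1)) (j p : Fin (n'+2))
    (h : EquationHolds L Θ n' i k j p) (T : C(Spx (n'+3), X)) :
    chainFace L Θ n' (chainFace L Θ (n'+1) T i j.castSucc) k p =
    chainFace L Θ n' (chainFace L Θ (n'+1) T k p.succ) i j := by
  ext x
  have hx := h x
  simp only [Fin.coe_castSucc, Fin.cast_val_eq_self] at hx
  simp only [chainFace, ContinuousMap.comp_apply, ContinuousMap.coe_mk]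
  exact congrArg T hx

end Aux

theorem boundary_squared_eq_zero
    (L : ℕ) (R : Type) [CommRing R] (m : Fin (L+1) → R)
    (X : Type) [TopologicalSpace X]
    (Θ : ∀ n : ℕ, Fin (L+1) → (Spx (n+1) ≃ₜ Spx (n+1)))
    (hEq : ∀ (n' : ℕ) (i k : Fin (L+1)) (j p : Fin (n'+2)), j ≤ p →
      EquationHolds L Θ n' i k j p) :
    ∀ (n : ℕ) (T : C(Spx (n+2), X)),
      paperBoundary R X L m Θ n
        (paperBoundary R X L m Θ (n+1) (Finsupp.single T 1)) = 0 := by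
  intro n T
  cases n with
  | zero => rfl
  | succ n' =>
    have e1 : ∀ (n : ℕ) (S : C(Spx (n+2), X)), bddry R X L m Θ n (Finsupp.single S 1)
        = ∑ j : Fin (n+2), ∑ i : Fin (L+1),
            ((-1:R)^(j:ℕ) * m i) • Finsupp.single (chainFace L Θ n S i j) (1:R) := by
      intro n S
      simp [bddry, Finsupp.lift_apply, Finsupp.sum_single_index]
    show bddry R X L m Θ n' (bddry R X L m Θ (n'+1) (Finsupp.single T 1)) = 0
    rw [e1 (n'+1) T, map_sum]
    simp only [map_sum, map_smul, e1 n', Finset.smul_sum, smul_smul]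
    set g : Fin (n'+3) × Fin (L+1) × Fin (n'+2) × Fin (L+1) → (C(Spx (n'+1), X) →₀ R) :=
      fun x => ((-1:R)^(x.1:ℕ) * m x.2.1 * ((-1:R)^(x.2.2.1:ℕ) * m x.2.2.2)) •
        Finsupp.single (chainFace L Θ n' (chainFace L Θ (n'+1) T x.2.1 x.1) x.2.2.2 x.2.2.1) (1:R)
      with hg
    have hprod : (∑ x : Fin (n'+3) × Fin (L+1) × Fin (n'+2) × Fin (L+1), g x)
        = ∑ j : Fin (n'+3), ∑ i : Fin (L+1), ∑ p : Fin (n'+2), ∑ k : Fin (L+1), g (j,i,p,k) := by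
      simp only [Fintype.sum_prod_type]
    rw [show (∑ j : Fin (n'+3), ∑ i : Fin (L+1), ∑ p : Fin (n'+2), ∑ k : Fin (L+1),
          ((-1:R)^(j:ℕ) * m i * ((-1:R)^(p:ℕ) * m k)) •
            Finsupp.single (chainFace L Θ n' (chainFace L Θ (n'+1) T i j) k p) (1:R))
        = ∑ x : Fin (n'+3) × Fin (L+1) × Fin (n'+2) × Fin (L+1), g x from by
      rw [hprod]]
    -- involution pairing: (j,i,p,k) with j ≤ p  ↔  (p+1, k, j, i)
    set σ : Fin (n'+3) × Fin (L+1) × Fin (n'+2) × Fin (L+1) →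
        Fin (n'+3) × Fin (L+1) × Fin (n'+2) × Fin (L+1) := fun x =>
      if h : (x.1 : ℕ) ≤ (x.2.2.1 : ℕ) then
        (x.2.2.1.succ, x.2.2.2, ⟨(x.1:ℕ), lt_of_le_of_lt h x.2.2.1.isLt⟩, x.2.1)
      else
        (x.2.2.1.castSucc, x.2.2.2, ⟨(x.1:ℕ) - 1, by omega⟩, x.2.1)
      with hσ
    have hinv : ∀ x, σ (σ x) = x := by
      rintro ⟨j, i, p, k⟩
      by_cases h : (j : ℕ) ≤ (p : ℕ)
      · simp only [hσ, dif_pos h]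
        have h2 : ¬ ((p.succ : ℕ) ≤ ((⟨(j:ℕ), lt_of_le_of_lt h p.isLt⟩ : Fin (n'+2)) : ℕ)) := by
          simp [Fin.val_succ]; omega
        simp only [dif_neg h2]
        refine Prod.ext ?_ (Prod.ext rfl (Prod.ext ?_ rfl))
        · exact Fin.ext (by simp)
        · exact Fin.ext (by simp [Fin.val_succ])
      · simp only [hσ, dif_neg h]
        have h2 : ((p.castSucc : Fin (n'+3)) : ℕ) ≤
            ((⟨(j:ℕ)-1, by omega⟩ : Fin (n'+2)) : ℕ) := by
          simp [Fin.coe_castSucc]; omega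
        simp only [dif_pos h2]
        refine Prod.ext ?_ (Prod.ext rfl (Prod.ext ?_ rfl))
        · exact Fin.ext (by simp [Fin.val_succ]; omega)
        · exact Fin.ext (by simp [Fin.coe_castSucc])
    have hmain : ∀ x, (x.1 : ℕ) ≤ (x.2.2.1 : ℕ) → g x + g (σ x) = 0 := by
      rintro ⟨j, i, p, k⟩ h
      simp only [hσ, dif_pos h]
      set j' : Fin (n'+2) := ⟨(j:ℕ), lt_of_le_of_lt h p.isLt⟩ with hj'
      have hjc : j = j'.castSucc := Fin.ext (by simp [hj'])
      have hface := key_comm Θ n' i k j' p (hEq n' i k j' p (by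
        rw [Fin.le_def]; simpa [hj'] using h)) T
      simp only [hg, hjc, hface]
      rw [← add_smul]
      convert zero_smul R _
      have : ((p.succ : Fin (n'+3)) : ℕ) = (p : ℕ) + 1 := rfl
      rw [this, pow_succ]
      simp only [Fin.coe_castSucc]
      ring
    have hadd : ∀ x, g x + g (σ x) = 0 := by
      intro x
      by_cases h : (x.1 : ℕ) ≤ (x.2.2.1 : ℕ)
      · exact hmain x h
      · have h2 : ((σ x).1 : ℕ) ≤ ((σ x).2.2.1 : ℕ) := by
          simp only [hσ, dif_neg h]; simp [Fin.coe_castSucc]; omega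
        have h3 := hmain (σ x) h2
        rw [hinv x] at h3
        exact (add_comm (g x) (g (σ x))).trans h3
    refine Finset.sum_ninvolution σ hadd ?_ (fun _ => Finset.mem_univ _) hinv
    intro x hx heq
    apply hx
    by_cases h : (x.1 : ℕ) ≤ (x.2.2.1 : ℕ)
    · have : ((σ x).1 : ℕ) = (x.2.2.1 : ℕ) + 1 := by simp [hσ, dif_pos h, Fin.val_succ]
      rw [heq] at this; omega
    · have : ((σ x).1 : ℕ) = (x.2.2.1 : ℕ) := by simp [hσ, dif_neg h, Fin.coe_castSucc]
      rw [heq] at this; omega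

end
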